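/- Let X and Y be locally compact Hausdorff spaces and let T : C₀(X)⁺ → C₀(Y)⁺ be a surjective map satisfying ‖T(f+g)‖ = ‖Tf + Tg‖ for all f, g ∈ C₀(X)⁺. Then T is additive (T(f+g) = Tf + Tg for all f, g ∈ C₀(X)⁺) and positively homogeneous (T(rf) = rTf for all r ≥ 0 and f ∈ C₀(X)⁺). -/

import Mathlib

open scoped ZeroAtInfty
open Set Filter

/-- The positive cone of `C₀(X, ℝ)`. -/
def posCone (X : Type*) [TopologicalSpace X] : Set C₀(X, ℝ) :=
  {f | ∀ x, 0 ≤ f x}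

namespace HirotaAux

lemma apply_le_norm {Y : Type*} [TopologicalSpace Y] (u : C₀(Y, ℝ)) (y : Y) : u y ≤ ‖u‖ :=
  le_trans (le_abs_self _) (u.toBCF.norm_coe_le_norm y)

lemma norm_le_of {Y : Type*} [TopologicalSpace Y] (u : C₀(Y, ℝ)) {C : ℝ} (hC : 0 ≤ C)
    (h : ∀ y, |u y| ≤ C) : ‖u‖ ≤ C := by
  rw [← ZeroAtInftyContinuousMap.norm_toBCF_eq_norm]
  exact (BoundedContinuousFunction.norm_le hC).2 h

lemma exists_near_sup {Y : Type*} [TopologicalSpace Y] [Nonempty Y] (u : C₀(Y, ℝ))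
    (hu : ∀ y, 0 ≤ u y) {ε : ℝ} (hε : 0 < ε) : ∃ y, ‖u‖ - ε < u y := by
  rcases le_or_gt 0 (‖u‖ - ε) with h | h
  · by_contra hc
    push_neg at hc
    have := norm_le_of u h (fun y => by rw [abs_of_nonneg (hu y)]; exact hc y)
    linarith
  · exact ⟨Classical.arbitrary Y, lt_of_lt_of_le h (hu _)⟩

lemma exists_bump {Y : Type*} [TopologicalSpace Y] [T2Space Y] [LocallyCompactSpace Y]
    (y : Y) {W : Set Y} (hW : IsOpen W) (hy : y ∈ W) :
    ∃ c : C₀(Y, ℝ), c y = 1 ∧ (∀ z, 0 ≤ c z) ∧ (∀ z, c z ≤ 1) ∧ ∀ z, z ∉ W → c z = 0 := by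
  obtain ⟨f, hf1, hf0, hfc, hf01⟩ :=
    exists_continuous_one_zero_of_isCompact (isCompact_singleton (x := y)) hW.isClosed_compl
      (Set.disjoint_left.2 (by rintro a rfl; simpa using hy))
  refine ⟨⟨f, hfc.is_zero_at_infty⟩, ?_, fun z => (hf01 z).1, fun z => (hf01 z).2, fun z hz => ?_⟩
  · exact hf1 rfl
  · exact hf0 hz

variable {X : Type*} [TopologicalSpace X]

lemma zero_mem : (0 : C₀(X, ℝ)) ∈ posCone X := fun x => by simp

lemma add_mem {f g : C₀(X, ℝ)} (hf : f ∈ posCone X) (hg : g ∈ posCone X) :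
    f + g ∈ posCone X := fun x => by
  simpa using add_nonneg (hf x) (hg x)

lemma smul_mem {r : ℝ} (hr : 0 ≤ r) {f : C₀(X, ℝ)} (hf : f ∈ posCone X) :
    r • f ∈ posCone X := fun x => by
  simpa using mul_nonneg hr (hf x)

end HirotaAux

set_option linter.unusedSectionVars false
section Main

open HirotaAux

variable {X Y : Type*} [TopologicalSpace X] [T2Space X] [LocallyCompactSpace X]
    [TopologicalSpace Y] [T2Space Y] [LocallyCompactSpace Y]
    {T : C₀(X, ℝ) → C₀(Y, ℝ)}

/-- Partial subadditivity: `T(g+m) ≤ Tg + ‖Tm‖` pointwise. -/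
lemma partial_sub (hmap : ∀ f ∈ posCone X, T f ∈ posCone Y)
    (hsurj : Set.SurjOn T (posCone X) (posCone Y))
    (hnorm : ∀ f ∈ posCone X, ∀ g ∈ posCone X, ‖T (f + g)‖ = ‖T f + T g‖) :
    ∀ g ∈ posCone X, ∀ m ∈ posCone X, ∀ y : Y, T (g + m) y ≤ T g y + ‖T m‖ := by
  intro g hg m hm y
  have key : ∀ ε : ℝ, 0 < ε → T (g + m) y ≤ T g y + ‖T m‖ + ε := by
    intro ε hε
    set W : Set Y := {z | T g z < T g y + ε} with hWdef
    have hWopen : IsOpen W := isOpen_lt (map_continuous (T g)) continuous_const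
    have hyW : y ∈ W := by simp [hWdef]; linarith
    obtain ⟨c, hcy, hc0, hc1, hcW⟩ := exists_bump y hWopen hyW
    set N : ℝ := ‖T g‖ with hNdef
    have hN0 : (0 : ℝ) ≤ N := norm_nonneg _
    have hNc : N • c ∈ posCone Y := fun z => by simpa using mul_nonneg hN0 (hc0 z)
    obtain ⟨p, hp, hTp⟩ := hsurj hNc
    have hTpz : ∀ z, T p z = N * c z := fun z => by rw [hTp]; simp
    have hTgy : (0 : ℝ) ≤ T g y := hmap g hg y
    -- bound on ‖T g + T p‖
    have hB : ‖T g + T p‖ ≤ N + (T g y + ε) := by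
      refine norm_le_of _ (by linarith) (fun z => ?_)
      have h1 : (T g + T p) z = T g z + N * c z := by simp [hTpz]
      rw [h1, abs_of_nonneg (add_nonneg (hmap g hg z) (mul_nonneg hN0 (hc0 z)))]
      by_cases hz : z ∈ W
      · have h2 : T g z < T g y + ε := hz
        have h3 : N * c z ≤ N := mul_le_of_le_one_right hN0 (hc1 z)
        linarith
      · rw [hcW z hz, mul_zero, add_zero]
        have := apply_le_norm (T g) z
        linarith
    have hgm : g + m ∈ posCone X := add_mem hg hm
    have hgp : g + p ∈ posCone X := add_mem hg hp
    have h1 : N + T (g + m) y ≤ ‖T (g + m) + T p‖ := by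
      have he : (T (g + m) + T p) y = T (g + m) y + N * c y := by simp [hTpz]
      have := apply_le_norm (T (g + m) + T p) y
      rw [he, hcy, mul_one] at this
      linarith
    have h2 : ‖T (g + m) + T p‖ = ‖T m + T (g + p)‖ := by
      rw [← hnorm (g + m) hgm p hp, ← hnorm m hm (g + p) hgp]
      have : g + m + p = m + (g + p) := by abel
      rw [this]
    have h3 : ‖T m + T (g + p)‖ ≤ ‖T m‖ + (N + (T g y + ε)) := by
      calc ‖T m + T (g + p)‖ ≤ ‖T m‖ + ‖T (g + p)‖ := norm_add_le _ _
        _ = ‖T m‖ + ‖T g + T p‖ := by rw [hnorm g hg p hp]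
        _ ≤ ‖T m‖ + (N + (T g y + ε)) := by linarith
    linarith
  by_contra hc
  push_neg at hc
  have := key ((T (g + m) y - (T g y + ‖T m‖)) / 2) (by linarith)
  linarith

/-- Pointwise subadditivity. -/
lemma subadd (hmap : ∀ f ∈ posCone X, T f ∈ posCone Y)
    (hsurj : Set.SurjOn T (posCone X) (posCone Y))
    (hnorm : ∀ f ∈ posCone X, ∀ g ∈ posCone X, ‖T (f + g)‖ = ‖T f + T g‖) :
    ∀ g ∈ posCone X, ∀ m ∈ posCone X, ∀ y : Y, T (g + m) y ≤ T g y + T m y := by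
  intro g hg m hm y
  have key : ∀ ε : ℝ, 0 < ε → T (g + m) y ≤ T g y + T m y + 2 * ε := by
    intro ε hε
    set W : Set Y := {z | T g z < T g y + ε ∧ T m z < T m y + ε} with hWdef
    have hWopen : IsOpen W :=
      (isOpen_lt (map_continuous (T g)) continuous_const).inter
        (isOpen_lt (map_continuous (T m)) continuous_const)
    have hyW : y ∈ W := ⟨by simp; linarith, by simp; linarith⟩
    obtain ⟨c, hcy, hc0, hc1, hcW⟩ := exists_bump y hWopen hyW
    set N : ℝ := ‖T g‖ + ‖T m‖ with hNdef
    have hN0 : (0 : ℝ) ≤ N := by positivity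
    have hNc : N • c ∈ posCone Y := fun z => by simpa using mul_nonneg hN0 (hc0 z)
    obtain ⟨p, hp, hTp⟩ := hsurj hNc
    have hTpz : ∀ z, T p z = N * c z := fun z => by rw [hTp]; simp
    have hTgy : (0 : ℝ) ≤ T g y := hmap g hg y
    have hTmy : (0 : ℝ) ≤ T m y := hmap m hm y
    have hTpnorm : ‖T p‖ ≤ N := by
      refine norm_le_of _ hN0 (fun z => ?_)
      rw [hTpz z, abs_of_nonneg (mul_nonneg hN0 (hc0 z))]
      exact mul_le_of_le_one_right hN0 (hc1 z)
    have hgm : g + m ∈ posCone X := add_mem hg hm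
    have hgp : g + p ∈ posCone X := add_mem hg hp
    have hB : ‖T m + T (g + p)‖ ≤ N + (T g y + T m y + 2 * ε) := by
      refine norm_le_of _ (by linarith) (fun z => ?_)
      have h1 : (T m + T (g + p)) z = T m z + T (g + p) z := by simp
      rw [h1, abs_of_nonneg (add_nonneg (hmap m hm z) (hmap _ hgp z))]
      by_cases hz : z ∈ W
      · have h2 : T m z < T m y + ε := hz.2
        have h3 : T (g + p) z ≤ T g z + ‖T p‖ := partial_sub hmap hsurj hnorm g hg p hp z
        have h4 : T g z < T g y + ε := hz.1
        linarith
      · have h5 : T p z = 0 := by rw [hTpz z, hcW z hz, mul_zero]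
        have h6 : T (g + p) z ≤ T p z + ‖T g‖ := by
          have hcomm : g + p = p + g := by abel
          rw [hcomm]
          exact partial_sub hmap hsurj hnorm p hp g hg z
        have h7 := apply_le_norm (T m) z
        rw [h5] at h6
        have h8 : (0:ℝ) ≤ ‖T m‖ := norm_nonneg _
        linarith
    have h1 : N + T (g + m) y ≤ ‖T (g + m) + T p‖ := by
      have he : (T (g + m) + T p) y = T (g + m) y + N * c y := by simp [hTpz]
      have := apply_le_norm (T (g + m) + T p) y
      rw [he, hcy, mul_one] at this
      linarith
    have h2 : ‖T (g + m) + T p‖ = ‖T m + T (g + p)‖ := by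
      rw [← hnorm (g + m) hgm p hp, ← hnorm m hm (g + p) hgp]
      have : g + m + p = m + (g + p) := by abel
      rw [this]
    linarith
  by_contra hc
  push_neg at hc
  have := key ((T (g + m) y - (T g y + T m y)) / 4) (by linarith)
  linarith

/-- Pointwise superadditivity. -/
lemma superadd (hmap : ∀ f ∈ posCone X, T f ∈ posCone Y)
    (hsurj : Set.SurjOn T (posCone X) (posCone Y))
    (hnorm : ∀ f ∈ posCone X, ∀ g ∈ posCone X, ‖T (f + g)‖ = ‖T f + T g‖) :
    ∀ g ∈ posCone X, ∀ m ∈ posCone X, ∀ y : Y, T g y + T m y ≤ T (g + m) y := by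
  intro g hg m hm y
  have hgm : g + m ∈ posCone X := add_mem hg hm
  have key : ∀ ε : ℝ, 0 < ε → T g y + T m y ≤ T (g + m) y + 3 * ε := by
    intro ε hε
    haveI : Nonempty Y := ⟨y⟩
    set W : Set Y := {z | T (g + m) z < T (g + m) y + ε ∧ T m y - ε < T m z} with hWdef
    have hWopen : IsOpen W :=
      (isOpen_lt (map_continuous (T (g + m))) continuous_const).inter
        (isOpen_lt continuous_const (map_continuous (T m)))
    have hyW : y ∈ W := ⟨by simp; linarith, by simp; linarith⟩
    obtain ⟨c, hcy, hc0, hc1, hcW⟩ := exists_bump y hWopen hyW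
    set N : ℝ := ‖T (g + m)‖ + ‖T g‖ + 2 * ε with hNdef
    have hN0 : (0 : ℝ) ≤ N := by positivity
    have hNc : N • c ∈ posCone Y := fun z => by simpa using mul_nonneg hN0 (hc0 z)
    obtain ⟨p, hp, hTp⟩ := hsurj hNc
    have hTpz : ∀ z, T p z = N * c z := fun z => by rw [hTp]; simp
    have hgp : g + p ∈ posCone X := add_mem hg hp
    have hTgmy : (0:ℝ) ≤ T (g + m) y := hmap _ hgm y
    have hTgmnorm : ‖T (g + m)‖ ≤ N := by
      have h0 : (0:ℝ) ≤ ‖T g‖ := norm_nonneg _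
      rw [hNdef]; linarith
    have hup : ‖T (g + m) + T p‖ ≤ N + (T (g + m) y + ε) := by
      refine norm_le_of _ (by linarith) (fun z => ?_)
      have h1 : (T (g + m) + T p) z = T (g + m) z + N * c z := by simp [hTpz]
      rw [h1, abs_of_nonneg (add_nonneg (hmap _ hgm z) (mul_nonneg hN0 (hc0 z)))]
      by_cases hz : z ∈ W
      · have h2 : T (g + m) z < T (g + m) y + ε := hz.1
        have h3 : N * c z ≤ N := mul_le_of_le_one_right hN0 (hc1 z)
        linarith
      · rw [hcW z hz, mul_zero, add_zero]
        have := apply_le_norm (T (g + m)) z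
        linarith
    have hunorm : T g y + N ≤ ‖T (g + p)‖ := by
      have h1 : ‖T (g + p)‖ = ‖T g + T p‖ := hnorm g hg p hp
      have h2 := apply_le_norm (T g + T p) y
      have h3 : (T g + T p) y = T g y + N * c y := by simp [hTpz]
      rw [h3, hcy, mul_one] at h2
      rw [h1]
      linarith
    obtain ⟨y', hy'⟩ := exists_near_sup (T (g + p)) (hmap _ hgp) hε
    have hsub : T (g + p) y' ≤ T g y' + N * c y' := by
      have := subadd hmap hsurj hnorm g hg p hp y'
      rw [hTpz y'] at this
      exact this
    have hTgy' := apply_le_norm (T g) y'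
    have hcpos : 0 < c y' := by
      by_contra hcp
      push_neg at hcp
      have hnp : N * c y' ≤ 0 := mul_nonpos_of_nonneg_of_nonpos hN0 hcp
      have h0 : (0:ℝ) ≤ T g y := hmap g hg y
      have h00 : (0:ℝ) ≤ ‖T (g + m)‖ := norm_nonneg _
      linarith
    have hy'W : y' ∈ W := by
      by_contra hzW
      rw [hcW y' hzW] at hcpos
      exact lt_irrefl 0 hcpos
    have hlow : T m y - ε + (T g y + N - ε) < ‖T (g + m) + T p‖ := by
      have h2 : ‖T (g + m) + T p‖ = ‖T m + T (g + p)‖ := by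
        rw [← hnorm (g + m) hgm p hp, ← hnorm m hm (g + p) hgp]
        have : g + m + p = m + (g + p) := by abel
        rw [this]
      have h3 := apply_le_norm (T m + T (g + p)) y'
      have h4 : (T m + T (g + p)) y' = T m y' + T (g + p) y' := by simp
      have h5 : T m y - ε < T m y' := hy'W.2
      rw [h4] at h3
      rw [h2]
      linarith
    linarith
  by_contra hc
  push_neg at hc
  have := key ((T g y + T m y - T (g + m) y) / 6) (by linarith)
  linarith

lemma Tadd (hmap : ∀ f ∈ posCone X, T f ∈ posCone Y)
    (hsurj : Set.SurjOn T (posCone X) (posCone Y))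
    (hnorm : ∀ f ∈ posCone X, ∀ g ∈ posCone X, ‖T (f + g)‖ = ‖T f + T g‖) :
    ∀ f ∈ posCone X, ∀ g ∈ posCone X, T (f + g) = T f + T g := by
  intro f hf g hg
  ext y
  have h1 := subadd hmap hsurj hnorm f hf g hg y
  have h2 := superadd hmap hsurj hnorm f hf g hg y
  have h3 : (T f + T g) y = T f y + T g y := by simp
  rw [h3]
  linarith

lemma Tzero (hnorm : ∀ f ∈ posCone X, ∀ g ∈ posCone X, ‖T (f + g)‖ = ‖T f + T g‖) :
    T 0 = 0 := by
  have h := hnorm 0 HirotaAux.zero_mem 0 HirotaAux.zero_mem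
  rw [add_zero] at h
  have h2 : ‖T 0 + T 0‖ = 2 * ‖T 0‖ := by
    rw [show T 0 + T 0 = (2:ℝ) • T 0 by module, norm_smul (2:ℝ) (T 0)]
    norm_num
  rw [h2] at h
  have h4 : ‖T 0‖ = 0 := by linarith
  exact norm_eq_zero.mp h4

lemma Tmono (hmap : ∀ f ∈ posCone X, T f ∈ posCone Y)
    (hsurj : Set.SurjOn T (posCone X) (posCone Y))
    (hnorm : ∀ f ∈ posCone X, ∀ g ∈ posCone X, ‖T (f + g)‖ = ‖T f + T g‖) :
    ∀ f ∈ posCone X, ∀ g ∈ posCone X, (∀ x, f x ≤ g x) → ∀ y, T f y ≤ T g y := by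
  intro f hf g hg hle y
  have hgf : g - f ∈ posCone X := fun x => by simpa using sub_nonneg.2 (hle x)
  have he : g = f + (g - f) := by abel
  calc T f y ≤ T f y + T (g - f) y := le_add_of_nonneg_right (hmap _ hgf y)
    _ = (T f + T (g - f)) y := by simp
    _ = T (f + (g - f)) y := by rw [Tadd hmap hsurj hnorm f hf (g - f) hgf]
    _ = T g y := by rw [← he]

end Main

/-- **Hirota's theorem (Lemma 2.1).** A surjective map `T : C₀(X)⁺ → C₀(Y)⁺` with
`‖T(f+g)‖ = ‖Tf + Tg‖` for all `f, g ∈ C₀(X)⁺` is additive and positively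
homogeneous. -/
theorem stmt17 {X Y : Type*} [TopologicalSpace X] [T2Space X] [LocallyCompactSpace X]
    [TopologicalSpace Y] [T2Space Y] [LocallyCompactSpace Y]
    (T : C₀(X, ℝ) → C₀(Y, ℝ))
    (hmap : ∀ f ∈ posCone X, T f ∈ posCone Y)
    (hsurj : Set.SurjOn T (posCone X) (posCone Y))
    (hnorm : ∀ f ∈ posCone X, ∀ g ∈ posCone X, ‖T (f + g)‖ = ‖T f + T g‖) :
    (∀ f ∈ posCone X, ∀ g ∈ posCone X, T (f + g) = T f + T g) ∧
      (∀ r : ℝ, 0 ≤ r → ∀ f ∈ posCone X, T (r • f) = r • T f) := by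
  have hadd := Tadd hmap hsurj hnorm
  have hzero := Tzero hnorm
  have hmono := Tmono hmap hsurj hnorm
  refine ⟨hadd, ?_⟩
  have hnat : ∀ n : ℕ, ∀ f ∈ posCone X, T ((n:ℝ) • f) = (n:ℝ) • T f := by
    intro n
    induction n with
    | zero => intro f hf; simp [hzero]
    | succ n ih =>
      intro f hf
      have hmemn : (n:ℝ) • f ∈ posCone X := HirotaAux.smul_mem (by positivity) hf
      have h1 : ((n + 1 : ℕ):ℝ) • f = (n:ℝ) • f + f := by
        push_cast
        module
      rw [h1, hadd _ hmemn f hf, ih f hf]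
      push_cast
      module
  have hrat : ∀ q : ℚ, 0 ≤ q → ∀ f ∈ posCone X, T ((q:ℝ) • f) = (q:ℝ) • T f := by
    intro q hq f hf
    have hd : ((q.den : ℕ):ℝ) ≠ 0 := by
      exact_mod_cast q.den_pos.ne'
    have hqR : (0:ℝ) ≤ (q:ℝ) := by exact_mod_cast hq
    have hqf : (q:ℝ) • f ∈ posCone X := HirotaAux.smul_mem hqR hf
    have hnum : (0:ℤ) ≤ q.num := Rat.num_nonneg.mpr hq
    have e0 : ((q.num.toNat : ℕ):ℝ) = ((q.den : ℕ):ℝ) * (q:ℝ) := by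
      have h1 : ((q.num.toNat : ℕ):ℝ) = ((q.num : ℤ):ℝ) := by
        exact_mod_cast congrArg (Int.cast : ℤ → ℝ) (Int.toNat_of_nonneg hnum)
      rw [h1, Rat.cast_def]
      field_simp
    have e1 : ((q.den : ℕ):ℝ) • ((q:ℝ) • f) = ((q.num.toNat : ℕ):ℝ) • f := by
      rw [smul_smul, e0]
    have e2 := hnat q.den ((q:ℝ) • f) hqf
    rw [e1, hnat q.num.toNat f hf] at e2
    have e3 : ((q.den : ℕ):ℝ) • ((q:ℝ) • T f) = ((q.den : ℕ):ℝ) • T ((q:ℝ) • f) := by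
      rw [smul_smul, ← e0]
      exact e2
    have e4 := congrArg (fun u => (((q.den : ℕ):ℝ))⁻¹ • u) e3
    simpa [smul_smul, inv_mul_cancel₀ hd] using e4.symm
  intro r hr f hf
  rcases eq_or_lt_of_le hr with h0 | hrpos
  · rw [← h0]
    simp [hzero]
  · ext y
    have hTfy : (0:ℝ) ≤ T f y := hmap f hf y
    have hrf : r • f ∈ posCone X := HirotaAux.smul_mem hr hf
    have hsr : (r • T f) y = r * T f y := by simp
    rw [hsr]
    have hub : ∀ ε : ℝ, 0 < ε → T (r • f) y ≤ r * T f y + ε := by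
      intro ε hε
      set δ := ε / (T f y + 1) with hδ
      have hδpos : 0 < δ := by positivity
      obtain ⟨q, hq1, hq2⟩ := exists_rat_btwn (show r < r + δ by linarith)
      have hq0 : (0:ℝ) ≤ (q:ℝ) := le_of_lt (lt_trans hrpos hq1)
      have hq0' : (0:ℚ) ≤ q := by exact_mod_cast hq0
      have hle : ∀ x, (r • f) x ≤ ((q:ℝ) • f) x := by
        intro x
        simp only [ZeroAtInftyContinuousMap.coe_smul, Pi.smul_apply, smul_eq_mul]
        exact mul_le_mul_of_nonneg_right (le_of_lt hq1) (hf x)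
      have h1 := hmono (r • f) hrf ((q:ℝ) • f) (HirotaAux.smul_mem hq0 hf) hle y
      rw [hrat q hq0' f hf] at h1
      have h2 : ((q:ℝ) • T f) y = (q:ℝ) * T f y := by simp
      rw [h2] at h1
      have h3 : (q:ℝ) * T f y ≤ (r + δ) * T f y :=
        mul_le_mul_of_nonneg_right (le_of_lt hq2) hTfy
      have h4 : δ * T f y ≤ ε := by
        have h5 : δ * (T f y + 1) = ε := div_mul_cancel₀ ε (by positivity)
        nlinarith
      nlinarith
    have hlb : ∀ ε : ℝ, 0 < ε → r * T f y ≤ T (r • f) y + ε := by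
      intro ε hε
      set δ := ε / (T f y + 1) with hδ
      have hδpos : 0 < δ := by positivity
      have hmax : max 0 (r - δ) < r := max_lt hrpos (by linarith)
      obtain ⟨q, hq1, hq2⟩ := exists_rat_btwn hmax
      have hq0 : (0:ℝ) ≤ (q:ℝ) := le_of_lt (lt_of_le_of_lt (le_max_left _ _) hq1)
      have hq0' : (0:ℚ) ≤ q := by exact_mod_cast hq0
      have hle : ∀ x, ((q:ℝ) • f) x ≤ (r • f) x := by
        intro x
        simp only [ZeroAtInftyContinuousMap.coe_smul, Pi.smul_apply, smul_eq_mul]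
        exact mul_le_mul_of_nonneg_right (le_of_lt hq2) (hf x)
      have h1 := hmono ((q:ℝ) • f) (HirotaAux.smul_mem hq0 hf) (r • f) hrf hle y
      rw [hrat q hq0' f hf] at h1
      have h2 : ((q:ℝ) • T f) y = (q:ℝ) * T f y := by simp
      rw [h2] at h1
      have hq3 : r - δ < (q:ℝ) := lt_of_le_of_lt (le_max_right _ _) hq1
      have h4 : δ * T f y ≤ ε := by
        have h5 : δ * (T f y + 1) = ε := div_mul_cancel₀ ε (by positivity)
        nlinarith
      nlinarith
    have hub' : T (r • f) y ≤ r * T f y := by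
      by_contra hcon
      push_neg at hcon
      have := hub ((T (r • f) y - r * T f y) / 2) (by linarith)
      linarith
    have hlb' : r * T f y ≤ T (r • f) y := by
      by_contra hcon
      push_neg at hcon
      have := hlb ((r * T f y - T (r • f) y) / 2) (by linarith)
      linarith
    linarith
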